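/- Let G_c and G_t be graphs on the same vertex set V, |V| = n ≥ 3, such that every G_c-independent set S spans at most 3|S| ≤ 3n edges in G_t (the 'abstract touching condition'). Suppose G_t has t ≥ 10n edges and the conclusion c ≥ 10⁻⁵ t²/n² is assumed inductively for all smaller vertex sets with the analogous hypotheses, where c = |E(G_c)|. Then if additionally t ≤ 10 n^{3/2}, one has |E(G_c)| ≥ 10⁻⁴ t²/n². (Case A of the paper, abstracted to graphs satisfying the planarity-derived independent-set edge bound.) -/

import Mathlib

open SimpleGraph Finset

section
variable {n k : ℕ}

private lemma card_forced (A : Finset (Fin n)) (i : Fin k) :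
    (Finset.univ.filter fun f : Fin n → Fin k => ∀ a ∈ A, f a = i).card = k ^ (n - A.card) := by
  classical
  rw [← Fintype.card_subtype]
  have e : {f : Fin n → Fin k // ∀ a ∈ A, f a = i} ≃ ({x // x ∈ Aᶜ} → Fin k) :=
    { toFun := fun f x => f.1 x.1
      invFun := fun g => ⟨fun v => if h : v ∈ A then i else g ⟨v, Finset.mem_compl.2 h⟩,
        fun a ha => dif_pos ha⟩
      left_inv := by
        intro f; ext v; dsimp; split_ifs with h
        · simp [f.2 v h]
        · rfl
      right_inv := by
        intro g; ext x; dsimp; rw [if_neg (Finset.mem_compl.1 x.2)]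
      }
  rw [Fintype.card_congr e]
  simp [Finset.card_compl]

private lemma card_mono (A : Finset (Fin n)) (hA : A.Nonempty) :
    (Finset.univ.filter fun f : Fin n → Fin k => ∃ i, ∀ a ∈ A, f a = i).card
      = k ^ (n - A.card) * k := by
  classical
  obtain ⟨a₀, ha₀⟩ := hA
  have h1 : (Finset.univ.filter fun f : Fin n → Fin k => ∃ i, ∀ a ∈ A, f a = i)
      = Finset.univ.biUnion (fun i : Fin k =>
          Finset.univ.filter fun f : Fin n → Fin k => ∀ a ∈ A, f a = i) := by
    ext f
    simp
  have hdisj : ∀ i ∈ (Finset.univ : Finset (Fin k)), ∀ j ∈ Finset.univ, i ≠ j →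
      Disjoint (Finset.univ.filter fun f : Fin n → Fin k => ∀ a ∈ A, f a = i)
        (Finset.univ.filter fun f : Fin n → Fin k => ∀ a ∈ A, f a = j) := by
    intro i _ j _ hij
    simp only [Finset.disjoint_left, mem_filter, mem_univ, true_and]
    intro f hf hf'
    exact hij ((hf a₀ ha₀).symm.trans (hf' a₀ ha₀))
  rw [h1, Finset.card_biUnion hdisj]
  simp [card_forced, mul_comm]

end

private lemma key (n : ℕ) (hn : 3 ≤ n) (Gc Gt : SimpleGraph (Fin n))
    [DecidableRel Gc.Adj] [DecidableRel Gt.Adj]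
    (hindep : ∀ S : Set (Fin n), (S.Pairwise fun u v => ¬ Gc.Adj u v) →
      {e ∈ Gt.edgeSet | ∀ v ∈ e, v ∈ S}.ncard ≤ 3 * S.ncard)
    (k : ℕ) :
    Gt.edgeFinset.card * (k ^ (n-2) * k) ≤
      3 * n * k ^ n + Gc.edgeFinset.card * (k ^ (n-2) * k)
        + (2 * n * Gc.edgeFinset.card) * (k ^ (n-3) * k) := by
  classical
  set S : (Fin n → Fin k) → Fin k → Finset (Fin n) :=
    fun f i => Finset.univ.filter fun v => f v = i ∧ ∀ w, Gc.Adj v w → f w ≠ f v with hS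
  set EIn : Finset (Fin n) → Finset (Sym2 (Fin n)) :=
    fun A => Gt.edgeFinset.filter fun e => ∀ x ∈ e, x ∈ A with hEIn
  -- upper bound on the total count
  have hU1 : ∀ f i, (EIn (S f i)).card ≤ 3 * (S f i).card := by
    intro f i
    have hpair : ((S f i : Set (Fin n))).Pairwise fun u v => ¬ Gc.Adj u v := by
      intro u hu v hv hne hadj
      simp only [hS, Finset.coe_filter, Set.mem_setOf_eq, mem_univ, true_and] at hu hv
      exact hu.2 v hadj (hv.1.trans hu.1.symm)
    have h2 := hindep _ hpair
    have h1 : {e ∈ Gt.edgeSet | ∀ v ∈ e, v ∈ (S f i : Set (Fin n))} = ↑(EIn (S f i)) := by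
      ext e
      simp [hEIn, Set.mem_setOf_eq, mem_edgeFinset]
    rw [h1, Set.ncard_coe_finset, Set.ncard_coe_finset] at h2
    exact h2
  have hU2 : ∀ f, ∑ i, (S f i).card ≤ n := by
    intro f
    have h1 : ((Finset.univ : Finset (Fin n)).filter
        (fun v => ∀ w, Gc.Adj v w → f w ≠ f v)).card = ∑ i, (S f i).card := by
      rw [Finset.card_eq_sum_card_fiberwise (f := fun v => f v)
        (t := (Finset.univ : Finset (Fin k))) (fun x _ => mem_univ _)]
      apply Finset.sum_congr rfl
      intro i _
      congr 1
      ext v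
      simp [hS, and_comm]
    calc ∑ i, (S f i).card = _ := h1.symm
      _ ≤ (Finset.univ : Finset (Fin n)).card := Finset.card_filter_le _ _
      _ = n := by simp
  have hUpper : ∑ f : Fin n → Fin k, ∑ i, (EIn (S f i)).card ≤ 3 * n * k ^ n := by
    calc ∑ f : Fin n → Fin k, ∑ i, (EIn (S f i)).card
        ≤ ∑ _f : Fin n → Fin k, 3 * n := by
          apply Finset.sum_le_sum
          intro f _
          calc ∑ i, (EIn (S f i)).card ≤ ∑ i, 3 * (S f i).card :=
                Finset.sum_le_sum fun i _ => hU1 f i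
            _ = 3 * ∑ i, (S f i).card := by rw [Finset.mul_sum]
            _ ≤ 3 * n := Nat.mul_le_mul_left _ (hU2 f)
      _ = 3 * n * k ^ n := by
          rw [Finset.sum_const, smul_eq_mul]
          simp [mul_comm]
  -- rewrite total count as a sum over edges
  have hswap : ∑ f : Fin n → Fin k, ∑ i, (EIn (S f i)).card
      = ∑ e ∈ Gt.edgeFinset, ∑ f : Fin n → Fin k, ∑ i : Fin k,
          (if ∀ x ∈ e, x ∈ S f i then 1 else 0) := by
    simp_rw [hEIn, Finset.card_filter]
    have h1 : ∀ f : Fin n → Fin k,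
        (∑ i : Fin k, ∑ e ∈ Gt.edgeFinset, (if ∀ x ∈ e, x ∈ S f i then 1 else 0))
          = ∑ e ∈ Gt.edgeFinset, ∑ i : Fin k, (if ∀ x ∈ e, x ∈ S f i then 1 else 0) :=
      fun f => Finset.sum_comm
    simp_rw [h1]
    exact Finset.sum_comm
  -- per-edge lower bound
  have hEdge : ∀ e ∈ Gt.edgeFinset \ Gc.edgeFinset,
      k ^ (n-2) * k ≤ (∑ f : Fin n → Fin k, ∑ i : Fin k,
          (if ∀ x ∈ e, x ∈ S f i then 1 else 0))
        + (Gc.edgeFinset.filter fun g => ∃ x, x ∈ g ∧ x ∈ e).card * (k ^ (n-3) * k) := by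
    intro e he
    induction e using Sym2.ind with
    | _ u v =>
    rw [mem_sdiff, mem_edgeFinset, mem_edgeFinset, mem_edgeSet, mem_edgeSet] at he
    obtain ⟨huv, hnc⟩ := he
    have hne : u ≠ v := huv.ne
    set Pall : Finset (Fin n → Fin k) := Finset.univ.filter fun f => f u = f v with hPall
    set Pg : Finset (Fin n → Fin k) :=
      Pall.filter (fun f => ∀ w, (Gc.Adj u w ∨ Gc.Adj v w) → f w ≠ f u) with hPg
    set B : Finset (Fin n) := Finset.univ.filter fun w => Gc.Adj u w ∨ Gc.Adj v w with hB
    -- cardinality of Pall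
    have hcard2 : ({u, v} : Finset (Fin n)).card = 2 := by
      rw [Finset.card_insert_of_notMem (by simp [hne]), Finset.card_singleton]
    have hPallcard : Pall.card = k ^ (n-2) * k := by
      have h1 : Pall = Finset.univ.filter
          fun f : Fin n → Fin k => ∃ i, ∀ a ∈ ({u, v} : Finset (Fin n)), f a = i := by
        ext f
        simp only [hPall, mem_filter, mem_univ, true_and, Finset.mem_insert,
          Finset.mem_singleton]
        constructor
        · intro h
          exact ⟨f v, by rintro a (rfl | rfl) <;> simp [h]⟩
        · rintro ⟨i, h⟩
          rw [h u (Or.inl rfl), h v (Or.inr rfl)]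
      rw [h1, card_mono _ ⟨u, by simp⟩, hcard2]
    -- Pg is counted by the big sum
    have hPgle : Pg.card ≤ ∑ f : Fin n → Fin k, ∑ i : Fin k,
        (if ∀ x ∈ s(u, v), x ∈ S f i then 1 else 0) := by
      have h1 : Pg.card = ∑ f : Fin n → Fin k,
          (if f ∈ Pg then 1 else 0) := by
        rw [Finset.sum_ite_mem, Finset.univ_inter, Finset.sum_const, smul_eq_mul, mul_one]
      rw [h1]
      apply Finset.sum_le_sum
      intro f _
      by_cases hf : f ∈ Pg
      · simp only [hf, if_true]
        have hmem : (if ∀ x ∈ s(u, v), x ∈ S f (f u) then 1 else 0) = 1 := by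
          rw [if_pos]
          intro x hx
          simp only [hPg, hPall, mem_filter, mem_univ, true_and] at hf
          obtain ⟨hfu, hfw⟩ := hf
          rw [Sym2.mem_iff] at hx
          simp only [hS, mem_filter, mem_univ, true_and]
          rcases hx with rfl | rfl
          · exact ⟨rfl, fun w hw => hfw w (Or.inl hw)⟩
          · exact ⟨hfu.symm, fun w hw => by rw [← hfu]; exact hfw w (Or.inr hw)⟩
        calc 1 = (if ∀ x ∈ s(u, v), x ∈ S f (f u) then 1 else 0) := hmem.symm
          _ ≤ ∑ i : Fin k, (if ∀ x ∈ s(u, v), x ∈ S f i then 1 else 0) :=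
            Finset.single_le_sum
              (f := fun i : Fin k => if ∀ x ∈ s(u, v), x ∈ S f i then 1 else 0)
              (fun i _ => Nat.zero_le _) (mem_univ (f u))
      · simp [hf]
    -- Pall is at most Pg plus the bad part
    have hsplit : Pall.card ≤ Pg.card + B.card * (k ^ (n-3) * k) := by
      have h0 : Pall.card = Pg.card + (Pall.filter
          (fun f => ¬ ∀ w, (Gc.Adj u w ∨ Gc.Adj v w) → f w ≠ f u)).card := by
        rw [hPg, Finset.card_filter_add_card_filter_not]
      rw [h0]
      apply Nat.add_le_add_left
      have hsub : Pall.filter (fun f => ¬ ∀ w, (Gc.Adj u w ∨ Gc.Adj v w) → f w ≠ f u)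
          ⊆ B.biUnion (fun w => Finset.univ.filter
            fun f : Fin n → Fin k => ∃ i, ∀ a ∈ ({u, v, w} : Finset (Fin n)), f a = i) := by
        intro f hf
        simp only [hPall, mem_filter, mem_univ, true_and] at hf
        obtain ⟨hfuv, hbad⟩ := hf
        push_neg at hbad
        obtain ⟨w, hw, hfw⟩ := hbad
        rw [Finset.mem_biUnion]
        refine ⟨w, by simp [hB, hw], ?_⟩
        simp only [mem_filter, mem_univ, true_and]
        refine ⟨f u, ?_⟩
        intro a ha
        simp only [Finset.mem_insert, Finset.mem_singleton] at ha
        rcases ha with rfl | rfl | rfl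
        · rfl
        · exact hfuv.symm
        · exact hfw
      calc (Pall.filter _).card ≤ _ := Finset.card_le_card hsub
        _ ≤ ∑ w ∈ B, (Finset.univ.filter
            (fun f : Fin n → Fin k => ∃ i, ∀ a ∈ ({u, v, w} : Finset (Fin n)), f a = i)).card :=
          Finset.card_biUnion_le
        _ ≤ ∑ _w ∈ B, k ^ (n-3) * k := by
          apply Finset.sum_le_sum
          intro w hw
          simp only [hB, mem_filter, mem_univ, true_and] at hw
          have hwu : w ≠ u := by
            rintro rfl
            rcases hw with h | h
            · exact Gc.irrefl h
            · exact hnc h.symm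
          have hwv : w ≠ v := by
            rintro rfl
            rcases hw with h | h
            · exact hnc h
            · exact Gc.irrefl h
          have hcard3 : ({u, v, w} : Finset (Fin n)).card = 3 := by
            rw [Finset.card_insert_of_notMem (by simp [hne, hwu.symm]),
              Finset.card_insert_of_notMem (by simp [hwv.symm]), Finset.card_singleton]
          rw [card_mono _ ⟨u, by simp⟩, hcard3]
        _ = B.card * (k ^ (n-3) * k) := by rw [Finset.sum_const, smul_eq_mul]
    -- B injects into the touching Gc-edges
    have hBle : B.card ≤ (Gc.edgeFinset.filter fun g => ∃ x, x ∈ g ∧ x ∈ s(u, v)).card := by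
      apply Finset.card_le_card_of_injOn
        (fun w => if Gc.Adj u w then s(u, w) else s(v, w))
      · intro w hw
        simp only [hB, Finset.mem_coe, mem_filter, mem_univ, true_and] at hw
        by_cases h : Gc.Adj u w
        · simp only [if_pos h, Finset.mem_coe, mem_filter, mem_edgeFinset, mem_edgeSet]
          exact ⟨h, u, by simp⟩
        · have hv' := hw.resolve_left h
          simp only [if_neg h, Finset.mem_coe, mem_filter, mem_edgeFinset, mem_edgeSet]
          exact ⟨hv', v, by simp⟩
      · intro w1 h1 w2 h2 heq
        simp only [hB, Finset.coe_filter, Set.mem_setOf_eq, mem_univ, true_and] at h1 h2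
        dsimp only at heq
        by_cases ha1 : Gc.Adj u w1 <;> by_cases ha2 : Gc.Adj u w2
        · rw [if_pos ha1, if_pos ha2, Sym2.eq_iff] at heq
          rcases heq with ⟨-, h⟩ | ⟨rfl, rfl⟩
          · exact h
          · exact (Gc.irrefl ha1).elim
        · rw [if_pos ha1, if_neg ha2, Sym2.eq_iff] at heq
          rcases heq with ⟨h, -⟩ | ⟨rfl, rfl⟩
          · exact (hne h).elim
          · exact (hnc ha1).elim
        · rw [if_neg ha1, if_pos ha2, Sym2.eq_iff] at heq
          rcases heq with ⟨h, -⟩ | ⟨rfl, rfl⟩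
          · exact (hne h.symm).elim
          · exact (hnc ha2).elim
        · rw [if_neg ha1, if_neg ha2, Sym2.eq_iff] at heq
          rcases heq with ⟨-, h⟩ | ⟨rfl, rfl⟩
          · exact h
          · exact (Gc.irrefl (h1.resolve_left ha1)).elim
    calc k ^ (n-2) * k = Pall.card := hPallcard.symm
      _ ≤ Pg.card + B.card * (k ^ (n-3) * k) := hsplit
      _ ≤ _ := by
        apply Nat.add_le_add hPgle
        exact Nat.mul_le_mul_right _ hBle
  -- total bad count
  have hbadsum : ∑ e ∈ Gt.edgeFinset,
      (Gc.edgeFinset.filter fun g => ∃ x, x ∈ g ∧ x ∈ e).card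
        ≤ 2 * n * Gc.edgeFinset.card := by
    have hdeg : ∀ z, Gt.degree z ≤ n := by
      intro z
      simpa using Finset.card_le_univ (Gt.neighborFinset z)
    have hcomm : ∑ e ∈ Gt.edgeFinset, (Gc.edgeFinset.filter fun g => ∃ x, x ∈ g ∧ x ∈ e).card
        = ∑ g ∈ Gc.edgeFinset, (Gt.edgeFinset.filter fun e => ∃ x, x ∈ g ∧ x ∈ e).card := by
      simp_rw [Finset.card_filter]
      exact Finset.sum_comm
    rw [hcomm]
    calc ∑ g ∈ Gc.edgeFinset, (Gt.edgeFinset.filter fun e => ∃ x, x ∈ g ∧ x ∈ e).card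
        ≤ ∑ _g ∈ Gc.edgeFinset, 2 * n := by
          apply Finset.sum_le_sum
          intro g hg
          induction g using Sym2.ind with
          | _ x y =>
          have hsub : (Gt.edgeFinset.filter fun e => ∃ z, z ∈ s(x, y) ∧ z ∈ e)
              ⊆ Gt.incidenceFinset x ∪ Gt.incidenceFinset y := by
            intro e he'
            simp only [mem_filter] at he'
            obtain ⟨heE, z, hz1, hz2⟩ := he'
            rw [Sym2.mem_iff] at hz1
            rw [Finset.mem_union, mem_incidenceFinset, mem_incidenceFinset]
            rcases hz1 with rfl | rfl
            · exact Or.inl ⟨mem_edgeFinset.1 heE, hz2⟩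
            · exact Or.inr ⟨mem_edgeFinset.1 heE, hz2⟩
          calc (Gt.edgeFinset.filter fun e => ∃ z, z ∈ s(x, y) ∧ z ∈ e).card
              ≤ (Gt.incidenceFinset x ∪ Gt.incidenceFinset y).card := Finset.card_le_card hsub
            _ ≤ (Gt.incidenceFinset x).card + (Gt.incidenceFinset y).card :=
              Finset.card_union_le _ _
            _ ≤ n + n := by
              rw [card_incidenceFinset_eq_degree, card_incidenceFinset_eq_degree]
              exact Nat.add_le_add (hdeg x) (hdeg y)
            _ = 2 * n := by ring
      _ = 2 * n * Gc.edgeFinset.card := by rw [Finset.sum_const, smul_eq_mul, mul_comm]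
  -- combine everything
  have hD : Gt.edgeFinset.card ≤ (Gt.edgeFinset \ Gc.edgeFinset).card + Gc.edgeFinset.card := by
    rw [Finset.card_sdiff_add_card]
    exact Finset.card_le_card Finset.subset_union_left
  have hlow : (Gt.edgeFinset \ Gc.edgeFinset).card * (k ^ (n-2) * k)
      ≤ 3 * n * k ^ n + (2 * n * Gc.edgeFinset.card) * (k ^ (n-3) * k) := by
    calc (Gt.edgeFinset \ Gc.edgeFinset).card * (k ^ (n-2) * k)
        = ∑ _e ∈ Gt.edgeFinset \ Gc.edgeFinset, k ^ (n-2) * k := by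
          rw [Finset.sum_const, smul_eq_mul]
      _ ≤ ∑ e ∈ Gt.edgeFinset \ Gc.edgeFinset,
            ((∑ f : Fin n → Fin k, ∑ i : Fin k, (if ∀ x ∈ e, x ∈ S f i then 1 else 0))
              + (Gc.edgeFinset.filter fun g => ∃ x, x ∈ g ∧ x ∈ e).card * (k ^ (n-3) * k)) :=
          Finset.sum_le_sum hEdge
      _ = (∑ e ∈ Gt.edgeFinset \ Gc.edgeFinset,
            ∑ f : Fin n → Fin k, ∑ i : Fin k, (if ∀ x ∈ e, x ∈ S f i then 1 else 0))
          + (∑ e ∈ Gt.edgeFinset \ Gc.edgeFinset,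
              (Gc.edgeFinset.filter fun g => ∃ x, x ∈ g ∧ x ∈ e).card) * (k ^ (n-3) * k) := by
          rw [Finset.sum_add_distrib, Finset.sum_mul]
      _ ≤ (∑ e ∈ Gt.edgeFinset,
            ∑ f : Fin n → Fin k, ∑ i : Fin k, (if ∀ x ∈ e, x ∈ S f i then 1 else 0))
          + (∑ e ∈ Gt.edgeFinset,
              (Gc.edgeFinset.filter fun g => ∃ x, x ∈ g ∧ x ∈ e).card) * (k ^ (n-3) * k) := by
          apply Nat.add_le_add
          · exact Finset.sum_le_sum_of_subset Finset.sdiff_subset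
          · exact Nat.mul_le_mul_right _
              (Finset.sum_le_sum_of_subset Finset.sdiff_subset)
      _ ≤ 3 * n * k ^ n + (2 * n * Gc.edgeFinset.card) * (k ^ (n-3) * k) := by
          apply Nat.add_le_add
          · rw [← hswap]; exact hUpper
          · exact Nat.mul_le_mul_right _ hbadsum
  calc Gt.edgeFinset.card * (k ^ (n-2) * k)
      ≤ ((Gt.edgeFinset \ Gc.edgeFinset).card + Gc.edgeFinset.card) * (k ^ (n-2) * k) :=
        Nat.mul_le_mul_right _ hD
    _ = (Gt.edgeFinset \ Gc.edgeFinset).card * (k ^ (n-2) * k)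
        + Gc.edgeFinset.card * (k ^ (n-2) * k) := by ring
    _ ≤ (3 * n * k ^ n + (2 * n * Gc.edgeFinset.card) * (k ^ (n-3) * k))
        + Gc.edgeFinset.card * (k ^ (n-2) * k) := Nat.add_le_add_right hlow _
    _ = 3 * n * k ^ n + Gc.edgeFinset.card * (k ^ (n-2) * k)
        + (2 * n * Gc.edgeFinset.card) * (k ^ (n-3) * k) := by ring

/-- Case A of the paper, abstracted to graphs: suppose that for all smaller vertex sets the
theorem (with the analogous hypotheses) holds, that every `Gc`-independent set `S` spans at
most `3|S|` edges of `Gt`, and that `t = |E(Gt)|` satisfies `10n ≤ t ≤ 10 n^{3/2}`. Then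
`|E(Gc)| ≥ 10⁻⁴ t²/n²`. -/
theorem caseA (n : ℕ) (hn : 3 ≤ n) (Gc Gt : SimpleGraph (Fin n))
    (hind : ∀ m : ℕ, m < n → ∀ Gc' Gt' : SimpleGraph (Fin m),
      (∀ S : Set (Fin m), (S.Pairwise fun u v => ¬ Gc'.Adj u v) →
        {e ∈ Gt'.edgeSet | ∀ v ∈ e, v ∈ S}.ncard ≤ 3 * S.ncard) →
      10 * m ≤ Gt'.edgeSet.ncard →
      ((Gc'.edgeSet.ncard : ℝ) ≥
        1 / 10 ^ 5 * ((Gt'.edgeSet.ncard : ℝ) ^ 2 / (m : ℝ) ^ 2)))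
    (hindep : ∀ S : Set (Fin n), (S.Pairwise fun u v => ¬ Gc.Adj u v) →
      {e ∈ Gt.edgeSet | ∀ v ∈ e, v ∈ S}.ncard ≤ 3 * S.ncard)
    (t : ℕ) (ht : Gt.edgeSet.ncard = t)
    (htlow : 10 * n ≤ t)
    (hthigh : (t : ℝ) ≤ 10 * (n : ℝ) ^ ((3 : ℝ) / 2)) :
    (Gc.edgeSet.ncard : ℝ) ≥ 1 / 10 ^ 4 * ((t : ℝ) ^ 2 / (n : ℝ) ^ 2) := by
  classical
  haveI : DecidableRel Gc.Adj := Classical.decRel _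
  haveI : DecidableRel Gt.Adj := Classical.decRel _
  by_contra hcon
  push_neg at hcon
  set c := Gc.edgeSet.ncard with hc
  have hcE : Gc.edgeFinset.card = c := by
    rw [hc, ← Set.ncard_coe_finset, coe_edgeFinset]
  have htE : Gt.edgeFinset.card = t := by
    rw [← ht, ← Set.ncard_coe_finset, coe_edgeFinset]
  have ht0 : 0 < t := by omega
  -- the choice of k
  set q := t / (30 * n) with hq
  set k := q + 1 with hk
  have hq1 : 30 * n * q + t % (30 * n) = t := Nat.div_add_mod t (30 * n)
  have hq2 : t % (30 * n) < 30 * n := Nat.mod_lt _ (by omega)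
  have hklbN : t < 30 * n * k := by
    rw [hk, Nat.mul_add, Nat.mul_one]
    omega
  -- real versions
  have hN0 : (0:ℝ) < n := by positivity
  have hK0 : (0:ℝ) < k := by positivity
  have hT0 : (0:ℝ) < t := by exact_mod_cast ht0
  have hqR : (q:ℝ) ≤ t / (30 * n) := by
    rw [le_div_iff₀ (by positivity)]
    have h3 : 30 * n * q ≤ t := by omega
    have h4 : ((30 * n * q : ℕ) : ℝ) ≤ t := by exact_mod_cast h3
    push_cast at h4
    linarith
  have hkubR : (k:ℝ) ≤ 2 * t / (15 * n) := by
    have h1 : (1:ℝ) ≤ t / (10 * n) := by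
      rw [le_div_iff₀ (by positivity)]
      exact_mod_cast by simpa using htlow
    have : (k:ℝ) = q + 1 := by exact_mod_cast rfl
    rw [this]
    calc (q:ℝ) + 1 ≤ t / (30 * n) + t / (10 * n) := by linarith
      _ = 2 * t / (15 * n) := by field_simp; ring
  have hklbR : (t:ℝ) ≤ 30 * n * k := by exact_mod_cast le_of_lt hklbN
  -- the key inequality, in ℝ
  have hkeyN := key n hn Gc Gt hindep k
  rw [hcE, htE] at hkeyN
  have hkeyR : (t:ℝ) * ((k:ℝ)^(n-2) * k)
      ≤ 3 * n * (k:ℝ)^n + c * ((k:ℝ)^(n-2) * k) + (2 * n * c) * ((k:ℝ)^(n-3) * k) := by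
    exact_mod_cast hkeyN
  have e1 : (k:ℝ)^(n-2) = (k:ℝ)^(n-3) * (k:ℝ) := by
    rw [← pow_succ]; congr 1; omega
  have e2 : (k:ℝ)^n = (k:ℝ)^(n-3) * (k:ℝ)^3 := by
    rw [← pow_add]; congr 1; omega
  rw [e1, e2] at hkeyR
  have ha : (0:ℝ) < (k:ℝ)^(n-3) * k := by positivity
  have hkey2 : (t:ℝ) * k ≤ 3 * n * (k:ℝ)^2 + c * k + 2 * n * c := by
    have h' : ((k:ℝ)^(n-3) * k) * ((t:ℝ) * k)
        ≤ ((k:ℝ)^(n-3) * k) * (3 * n * (k:ℝ)^2 + c * k + 2 * n * c) := by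
      calc ((k:ℝ)^(n-3) * k) * ((t:ℝ) * k)
          = (t:ℝ) * ((k:ℝ)^(n-3) * (k:ℝ) * k) := by ring
        _ ≤ 3 * n * ((k:ℝ)^(n-3) * (k:ℝ)^3) + c * ((k:ℝ)^(n-3) * (k:ℝ) * k)
            + (2 * n * c) * ((k:ℝ)^(n-3) * k) := hkeyR
        _ = ((k:ℝ)^(n-3) * k) * (3 * n * (k:ℝ)^2 + c * k + 2 * n * c) := by ring
    exact (mul_le_mul_iff_right₀ ha).mp h'
  -- numeric facts
  have hN1 : (1:ℝ) ≤ n := by exact_mod_cast (by omega : 1 ≤ n)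
  have hTn2 : (t:ℝ) ≤ 10 * (n:ℝ)^2 := by
    have h1 : (n:ℝ) ^ ((3:ℝ)/2) ≤ (n:ℝ) ^ (((2:ℕ)):ℝ) :=
      Real.rpow_le_rpow_of_exponent_le hN1 (by norm_num)
    rw [Real.rpow_natCast] at h1
    linarith [hthigh, h1]
  have hTsq : (t:ℝ)^2 / (n:ℝ)^2 ≤ 10 * t := by
    rw [div_le_iff₀ (by positivity)]
    nlinarith [hT0, hTn2]
  have hCt : (c:ℝ) ≤ (1/1000) * t := by
    calc (c:ℝ) ≤ 1/10^4 * ((t:ℝ)^2 / (n:ℝ)^2) := le_of_lt hcon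
      _ ≤ 1/10^4 * (10 * t) := by linarith [hTsq]
      _ = (1/1000) * t := by ring
  have A1 : (c:ℝ) * k ≤ (1/1000) * ((t:ℝ) * k) := by
    calc (c:ℝ) * k ≤ ((1/1000) * t) * k :=
        mul_le_mul_of_nonneg_right hCt (le_of_lt hK0)
      _ = (1/1000) * ((t:ℝ) * k) := by ring
  have A2 : 3 * (n:ℝ) * (k:ℝ)^2 ≤ (2/5) * ((t:ℝ) * k) := by
    have h := mul_le_mul_of_nonneg_left hkubR (show (0:ℝ) ≤ 3 * n * k by positivity)
    calc 3 * (n:ℝ) * (k:ℝ)^2 = 3 * n * k * k := by ring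
      _ ≤ 3 * n * k * (2 * t / (15 * n)) := h
      _ = (2/5) * ((t:ℝ) * k) := by field_simp; ring
  have A3 : 2 * (n:ℝ) * c ≤ (6/1000) * ((t:ℝ) * k) := by
    have h1 : 2 * (n:ℝ) * c ≤ 2 * n * (1/10^4 * ((t:ℝ)^2 / (n:ℝ)^2)) :=
      mul_le_mul_of_nonneg_left (le_of_lt hcon) (by positivity)
    have h2 : (t:ℝ) * t ≤ (30 * n * k) * t :=
      mul_le_mul_of_nonneg_right hklbR (le_of_lt hT0)
    calc 2 * (n:ℝ) * c ≤ 2 * n * (1/10^4 * ((t:ℝ)^2 / (n:ℝ)^2)) := h1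
      _ = (2/10^4) * ((t:ℝ) * t) / n := by field_simp
      _ ≤ (2/10^4) * ((30 * n * k) * t) / n := by gcongr
      _ = (6/1000) * ((t:ℝ) * k) := by field_simp; ring
  have hTK : (0:ℝ) < (t:ℝ) * k := by positivity
  linarith [hkey2, A1, A2, A3, hTK]
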